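/- (Theorem 1, explicit form) Let W_x ∈ ℝ^{n×n} with ‖W_x‖ < 1 and W_in ∈ ℝ^{n×m}, and define the Echo State Network state map f(x, ω) = tanh(W_x x + W_in ω). Let Q = I − W_xᵀ W_x, λ_min(Q) its smallest eigenvalue, and α = √(1 − λ_min(Q)). For any input sequence ω : ℕ → ℝᵐ and initial states x₀, x₀' ∈ ℝⁿ, the trajectories x(k+1) = f(x(k), ω(k)) with x(0) = x₀ and x'(k+1) = f(x'(k), ω(k)) with x'(0) = x₀' satisfy, for all k ∈ ℕ, ‖x(k) − x'(k)‖₂ ≤ α^k ‖x₀ − x₀'‖₂, and moreover 0 ≤ α < 1. -/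

import Mathlib

open Matrix
open scoped Matrix.Norms.L2Operator

private lemma esn_tanh_hasDerivAt (x : ℝ) :
    HasDerivAt Real.tanh (1 / Real.cosh x ^ 2) x := by
  have h := (Real.hasDerivAt_sinh x).div (Real.hasDerivAt_cosh x) (Real.cosh_pos x).ne'
  have : (Real.cosh x * Real.cosh x - Real.sinh x * Real.sinh x) / Real.cosh x ^ 2
      = 1 / Real.cosh x ^ 2 := by
    rw [← sq, ← sq, Real.cosh_sq_sub_sinh_sq]
  rw [this] at h
  rw [show Real.tanh = Real.sinh / Real.cosh from funext fun y => Real.tanh_eq_sinh_div_cosh y]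
  exact h

private lemma esn_tanh_lip (a b : ℝ) : |Real.tanh a - Real.tanh b| ≤ |a - b| := by
  have := convex_univ.norm_image_sub_le_of_norm_hasDerivWithin_le
    (f := Real.tanh) (f' := fun y => 1 / Real.cosh y ^ 2) (C := 1) (s := Set.univ)
    (fun y _ => (esn_tanh_hasDerivAt y).hasDerivWithinAt)
    (fun y _ => by
      rw [Real.norm_eq_abs, abs_of_nonneg (by positivity), div_le_one (by positivity)]
      nlinarith [Real.one_le_cosh y])
    (Set.mem_univ b) (Set.mem_univ a)
  simpa using this

private lemma esn_dot_self_eq {n : ℕ} (u : Fin n → ℝ) :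
    u ⬝ᵥ u = ‖(EuclideanSpace.equiv (Fin n) ℝ).symm u‖ ^ 2 := by
  rw [← real_inner_self_eq_norm_sq]
  simp [inner, dotProduct]

theorem esn_incremental_exponential_bound {n m : ℕ} (hn : 0 < n)
    (Wx : Matrix (Fin n) (Fin n) ℝ) (Win : Matrix (Fin n) (Fin m) ℝ)
    (hW : ‖Wx‖ < 1) (hQ : (1 - Wxᵀ * Wx).IsHermitian)
    (ω : ℕ → EuclideanSpace ℝ (Fin m)) (x x' : ℕ → EuclideanSpace ℝ (Fin n))
    (hx : ∀ k, x (k + 1) =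
      (WithLp.toLp 2 fun i => Real.tanh ((Matrix.toEuclideanLin Wx (x k) + Matrix.toEuclideanLin Win (ω k)) i) :
        EuclideanSpace ℝ (Fin n)))
    (hx' : ∀ k, x' (k + 1) =
      (WithLp.toLp 2 fun i => Real.tanh ((Matrix.toEuclideanLin Wx (x' k) + Matrix.toEuclideanLin Win (ω k)) i) :
        EuclideanSpace ℝ (Fin n))) :
    (∀ k : ℕ, ‖x k - x' k‖ ≤ (Real.sqrt (1 - ⨅ i, hQ.eigenvalues i)) ^ k * ‖x 0 - x' 0‖) ∧
    0 ≤ Real.sqrt (1 - ⨅ i, hQ.eigenvalues i) ∧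
    Real.sqrt (1 - ⨅ i, hQ.eigenvalues i) < 1 := by
  haveI : Nonempty (Fin n) := Fin.pos_iff_nonempty.mp hn
  have hbdd : BddBelow (Set.range hQ.eigenvalues) := (Set.finite_range _).bddBelow
  set lam : ℝ := ⨅ i, hQ.eigenvalues i with hlam
  set α : ℝ := Real.sqrt (1 - lam) with hα
  -- dot product expansion of Q
  have hdotQ : ∀ v : Fin n → ℝ, v ⬝ᵥ ((1 - Wxᵀ * Wx) *ᵥ v)
      = v ⬝ᵥ v - (Wx *ᵥ v) ⬝ᵥ (Wx *ᵥ v) := by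
    intro v
    rw [sub_mulVec, one_mulVec, dotProduct_sub, ← mulVec_mulVec,
      dotProduct_mulVec, vecMul_transpose]
  -- each eigenvalue is in (0, 1]
  have heig : ∀ i, 0 < hQ.eigenvalues i ∧ hQ.eigenvalues i ≤ 1 := by
    intro i
    set u : Fin n → ℝ := ⇑(hQ.eigenvectorBasis i) with hu
    have hsymm : (EuclideanSpace.equiv (Fin n) ℝ).symm u = hQ.eigenvectorBasis i := rfl
    have hb1 : u ⬝ᵥ u = 1 := by
      rw [esn_dot_self_eq, hsymm, hQ.eigenvectorBasis.orthonormal.1 i, one_pow]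
    have hmv : (1 - Wxᵀ * Wx) *ᵥ u = hQ.eigenvalues i • u := hQ.mulVec_eigenvectorBasis i
    have hdot : u ⬝ᵥ ((1 - Wxᵀ * Wx) *ᵥ u) = hQ.eigenvalues i := by
      rw [hmv, dotProduct_smul, smul_eq_mul, hb1, mul_one]
    have hWb : ‖(EuclideanSpace.equiv (Fin n) ℝ).symm (Wx *ᵥ u)‖
        ≤ ‖Wx‖ * ‖(EuclideanSpace.equiv (Fin n) ℝ).symm u‖ :=
      Matrix.l2_opNorm_mulVec Wx ((EuclideanSpace.equiv (Fin n) ℝ).symm u)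
    have hWb1 : ‖(EuclideanSpace.equiv (Fin n) ℝ).symm (Wx *ᵥ u)‖ < 1 := by
      rw [hsymm, hQ.eigenvectorBasis.orthonormal.1 i, mul_one] at hWb
      exact hWb.trans_lt hW
    have hWdot : (Wx *ᵥ u) ⬝ᵥ (Wx *ᵥ u) < 1 := by
      rw [esn_dot_self_eq]
      nlinarith [norm_nonneg ((EuclideanSpace.equiv (Fin n) ℝ).symm (Wx *ᵥ u))]
    have hWdotnn : 0 ≤ (Wx *ᵥ u) ⬝ᵥ (Wx *ᵥ u) := by
      rw [esn_dot_self_eq]; positivity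
    have hval : hQ.eigenvalues i = 1 - (Wx *ᵥ u) ⬝ᵥ (Wx *ᵥ u) := by
      rw [← hdot, hdotQ, hb1]
    constructor <;> [linarith; linarith]
  obtain ⟨j, hj⟩ := exists_eq_ciInf_of_finite (f := hQ.eigenvalues)
  have hlampos : 0 < lam := by rw [hlam, ← hj]; exact (heig j).1
  have hlamle : lam ≤ 1 := by rw [hlam, ← hj]; exact (heig j).2
  have h1lam : 0 ≤ 1 - lam := by linarith
  -- PosSemidef (Q - lam • 1)
  have hpsd : ((1 - Wxᵀ * Wx) - lam • 1).PosSemidef := by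
    have hU : (hQ.eigenvectorUnitary : Matrix (Fin n) (Fin n) ℝ)
        * star (hQ.eigenvectorUnitary : Matrix (Fin n) (Fin n) ℝ) = 1 :=
      (Matrix.mem_unitaryGroup_iff).mp hQ.eigenvectorUnitary.2
    have hdecomp : (1 - Wxᵀ * Wx) - lam • 1 = (hQ.eigenvectorUnitary : Matrix (Fin n) (Fin n) ℝ)
        * diagonal (fun i => hQ.eigenvalues i - lam)
        * (hQ.eigenvectorUnitary : Matrix (Fin n) (Fin n) ℝ)ᴴ := by
      conv_lhs => rw [hQ.spectral_theorem, Unitary.conjStarAlgAut_apply]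
      rw [show (lam • (1 : Matrix (Fin n) (Fin n) ℝ)) = (hQ.eigenvectorUnitary :
          Matrix (Fin n) (Fin n) ℝ) * (lam • 1) * star (hQ.eigenvectorUnitary :
          Matrix (Fin n) (Fin n) ℝ) by
        rw [mul_smul_comm, smul_mul_assoc, mul_one, hU]]
      rw [← sub_mul, ← mul_sub]
      congr 2
      rw [smul_one_eq_diagonal, diagonal_sub]
      rfl
    rw [hdecomp]
    exact (posSemidef_diagonal_iff.mpr fun i =>
      sub_nonneg.mpr (ciInf_le hbdd i)).mul_mul_conjTranspose_same _
  -- contraction bound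
  have hT : ∀ v : EuclideanSpace ℝ (Fin n),
      Matrix.toEuclideanLin Wx v = (EuclideanSpace.equiv (Fin n) ℝ).symm (Wx *ᵥ ⇑v) := fun _ => rfl
  have key : ∀ v : EuclideanSpace ℝ (Fin n),
      ‖Matrix.toEuclideanLin Wx v‖ ≤ α * ‖v‖ := by
    intro v
    have hsymm : (EuclideanSpace.equiv (Fin n) ℝ).symm (⇑v) = v := rfl
    have h0 : 0 ≤ (⇑v) ⬝ᵥ (((1 - Wxᵀ * Wx) - lam • 1) *ᵥ ⇑v) := by
      have := hpsd.dotProduct_mulVec_nonneg (⇑v)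
      simpa using this
    have hexp : (⇑v) ⬝ᵥ (((1 - Wxᵀ * Wx) - lam • 1) *ᵥ ⇑v)
        = (⇑v ⬝ᵥ ⇑v - (Wx *ᵥ ⇑v) ⬝ᵥ (Wx *ᵥ ⇑v)) - lam * (⇑v ⬝ᵥ ⇑v) := by
      rw [sub_mulVec, dotProduct_sub, hdotQ, smul_mulVec, one_mulVec,
        dotProduct_smul, smul_eq_mul]
    have hineq : (Wx *ᵥ ⇑v) ⬝ᵥ (Wx *ᵥ ⇑v) ≤ (1 - lam) * (⇑v ⬝ᵥ ⇑v) := by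
      rw [hexp] at h0; linarith
    have hsq : ‖Matrix.toEuclideanLin Wx v‖ ^ 2 ≤ (α * ‖v‖) ^ 2 := by
      rw [hT v, ← esn_dot_self_eq, mul_pow, hα, Real.sq_sqrt h1lam]
      calc (Wx *ᵥ ⇑v) ⬝ᵥ (Wx *ᵥ ⇑v) ≤ (1 - lam) * (⇑v ⬝ᵥ ⇑v) := hineq
        _ = (1 - lam) * ‖v‖ ^ 2 := by rw [esn_dot_self_eq, hsymm]
    have := Real.sqrt_le_sqrt hsq
    rwa [Real.sqrt_sq (norm_nonneg _), Real.sqrt_sq (by positivity)] at this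
  -- one-step bound
  have hstep : ∀ k, ‖x (k + 1) - x' (k + 1)‖ ≤ ‖Matrix.toEuclideanLin Wx (x k - x' k)‖ := by
    intro k
    set p : EuclideanSpace ℝ (Fin n) :=
      Matrix.toEuclideanLin Wx (x k) + Matrix.toEuclideanLin Win (ω k) with hp
    set q : EuclideanSpace ℝ (Fin n) :=
      Matrix.toEuclideanLin Wx (x' k) + Matrix.toEuclideanLin Win (ω k) with hq
    have hdiff : ∀ i, (Matrix.toEuclideanLin Wx (x k - x' k)) i = p i - q i := by
      intro i
      rw [map_sub]
      simp [hp, hq]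
    rw [hx k, hx' k, EuclideanSpace.norm_eq, EuclideanSpace.norm_eq]
    apply Real.sqrt_le_sqrt
    apply Finset.sum_le_sum
    intro i _
    have h1 : ((WithLp.toLp 2 fun i => Real.tanh (p i) : EuclideanSpace ℝ (Fin n))
        - (WithLp.toLp 2 fun i => Real.tanh (q i) : EuclideanSpace ℝ (Fin n))) i
        = Real.tanh (p i) - Real.tanh (q i) := rfl
    rw [h1, hdiff i, Real.norm_eq_abs, Real.norm_eq_abs]
    exact pow_le_pow_left₀ (abs_nonneg _) (esn_tanh_lip _ _) 2
  have hα0 : 0 ≤ α := Real.sqrt_nonneg _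
  refine ⟨?_, hα0, ?_⟩
  · intro k
    induction k with
    | zero => simp
    | succ k ih =>
      calc ‖x (k + 1) - x' (k + 1)‖ ≤ ‖Matrix.toEuclideanLin Wx (x k - x' k)‖ := hstep k
        _ ≤ α * ‖x k - x' k‖ := key _
        _ ≤ α * (α ^ k * ‖x 0 - x' 0‖) := by
            exact mul_le_mul_of_nonneg_left ih hα0
        _ = α ^ (k + 1) * ‖x 0 - x' 0‖ := by ring
  · have : Real.sqrt (1 - lam) < Real.sqrt 1 := Real.sqrt_lt_sqrt h1lam (by linarith)
    rwa [Real.sqrt_one] at this
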